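/- Let k and q be natural numbers with q > k ≥ 1, and let ε > 0. There exists a real N ≥ 1 (depending only on k, q, ε) such that: for every λ > 1 and every family of k ORC strategies t^{(1)}, …, t^{(k)} (sequences of reals ≥ 1), if every x ∈ [1, N] is λ-covered in at least q rounds counted with multiplicity over all robots and rounds, then λ ≥ 2·(q^q/((q-k)^{q-k} · k^k))^{1/k} + 1 − ε. -/

import Mathlib

open Real

noncomputable def Gfun (a : ℝ) : ℝ := a ^ a / (a - 1) ^ (a - 1)

lemma Gfun_pos {a : ℝ} (ha : 1 < a) : 0 < Gfun a :=
  div_pos (rpow_pos_of_pos (by linarith) _) (rpow_pos_of_pos (by linarith) _)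

lemma key_ineq {a ρ : ℝ} (ha : 1 < a) (hρ : 1 < ρ) : Gfun a * (ρ - 1) ≤ ρ ^ a := by
  have ha0 : (0:ℝ) < a := by linarith
  have ha1 : (0:ℝ) < a - 1 := by linarith
  set ρ₀ : ℝ := a / (a - 1) with hρ₀def
  have hρ₀ : 0 < ρ₀ := div_pos ha0 ha1
  have hρpos : (0:ℝ) < ρ := by linarith
  have hz : (-1:ℝ) ≤ ρ / ρ₀ - 1 := by
    have : 0 < ρ / ρ₀ := div_pos hρpos hρ₀
    linarith
  have hbern := one_add_mul_self_le_rpow_one_add hz ha.le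
  have h1 : (1 : ℝ) + (ρ / ρ₀ - 1) = ρ / ρ₀ := by ring
  rw [h1] at hbern
  have hval : (1:ℝ) + a * (ρ / ρ₀ - 1) = (a - 1) * (ρ - 1) := by
    have : a * (ρ / ρ₀) = (a - 1) * ρ := by
      rw [hρ₀def]; field_simp
    have := this
    nlinarith [this]
  rw [hval] at hbern
  have hdiv : (ρ / ρ₀) ^ a = ρ ^ a / ρ₀ ^ a := Real.div_rpow hρpos.le hρ₀.le a
  rw [hdiv] at hbern
  have hρ₀a : (0:ℝ) < ρ₀ ^ a := rpow_pos_of_pos hρ₀ _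
  have hmul : ρ₀ ^ a * ((a - 1) * (ρ - 1)) ≤ ρ ^ a := by
    have := (le_div_iff₀ hρ₀a).mp hbern
    linarith [this]
  have hG : Gfun a = ρ₀ ^ a * (a - 1) := by
    rw [Gfun, hρ₀def, Real.div_rpow ha0.le ha1.le]
    have h2 : (a - 1) ^ a = (a - 1) ^ (a - 1) * (a - 1) := by
      rw [← Real.rpow_add_one (ne_of_gt ha1)]; ring_nf
    rw [h2]
    have h3 : (0:ℝ) < (a-1) ^ (a-1) := rpow_pos_of_pos ha1 _
    field_simp
  rw [hG]
  calc ρ₀ ^ a * (a-1) * (ρ - 1) = ρ₀ ^ a * ((a - 1) * (ρ - 1)) := by ring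
    _ ≤ ρ ^ a := hmul

lemma le_Gfun {a : ℝ} (ha : 1 < a) : a ≤ Gfun a := by
  have ha0 : (0:ℝ) < a := by linarith
  have ha1 : (0:ℝ) < a - 1 := by linarith
  have h2 : a ^ a = a ^ (a - 1) * a := by
    rw [← Real.rpow_add_one (ne_of_gt ha0)]; ring_nf
  have h3 : (a-1) ^ (a-1) ≤ a ^ (a-1) := by
    apply Real.rpow_le_rpow ha1.le (by linarith) (by linarith)
  have h4 : (0:ℝ) < (a-1) ^ (a-1) := rpow_pos_of_pos ha1 _
  rw [Gfun, h2]
  rw [le_div_iff₀ h4]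
  calc a * (a-1)^(a-1) ≤ a ^ (a-1) * a := by nlinarith
    _ = a ^ (a-1) * a := rfl

lemma Gfun_contAt {a : ℝ} (ha : 1 < a) : ContinuousAt Gfun a := by
  have ha0 : (0:ℝ) < a := by linarith
  have h1 : ContinuousAt (fun x : ℝ => x ^ x) a := by
    apply ContinuousAt.rpow continuousAt_id continuousAt_id
    exact Or.inl (ne_of_gt ha0)
  have h2 : ContinuousAt (fun x : ℝ => (x - 1) ^ (x - 1)) a := by
    apply ContinuousAt.rpow (by fun_prop) (by fun_prop)
    exact Or.inl (by simp; intro h; linarith)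
  exact h1.div h2 (ne_of_gt (rpow_pos_of_pos (by linarith) _))

lemma Gfun_alpha0 {k q : ℕ} (hk : 1 ≤ k) (hkq : k < q) :
    Gfun ((q:ℝ)/(k:ℝ)) =
      ((q : ℝ) ^ q / (((q - k : ℕ) : ℝ) ^ (q - k) * (k : ℝ) ^ k)) ^ ((1 : ℝ) / k) := by
  have hkr : (1:ℝ) ≤ (k:ℝ) := by exact_mod_cast hk
  have hk0 : (0:ℝ) < (k:ℝ) := by linarith
  have hqk : (k:ℝ) < (q:ℝ) := by exact_mod_cast hkq
  have hq0 : (0:ℝ) < (q:ℝ) := by linarith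
  have hdcast : ((q - k : ℕ) : ℝ) = (q:ℝ) - (k:ℝ) := by
    push_cast [Nat.cast_sub hkq.le]; ring
  have hd0 : (0:ℝ) < ((q - k : ℕ) : ℝ) := by rw [hdcast]; linarith
  have hα : (1:ℝ) < (q:ℝ)/(k:ℝ) := (one_lt_div hk0).mpr hqk
  have hL : 0 < Gfun ((q:ℝ)/(k:ℝ)) := Gfun_pos hα
  have hbase : (0:ℝ) < (q : ℝ) ^ q / (((q - k : ℕ) : ℝ) ^ (q - k) * (k : ℝ) ^ k) := by
    positivity
  have hR : (0:ℝ) < ((q : ℝ) ^ q / (((q - k : ℕ) : ℝ) ^ (q - k) * (k : ℝ) ^ k)) ^ ((1 : ℝ) / k) :=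
    rpow_pos_of_pos hbase _
  rw [← Real.exp_log hL, ← Real.exp_log hR]
  congr 1
  have hα0 : (0:ℝ) < (q:ℝ)/(k:ℝ) := by linarith
  have hα1 : (0:ℝ) < (q:ℝ)/(k:ℝ) - 1 := by linarith
  have hlogL : Real.log (Gfun ((q:ℝ)/(k:ℝ))) =
      ((q:ℝ)/(k:ℝ)) * Real.log ((q:ℝ)/(k:ℝ))
      - ((q:ℝ)/(k:ℝ) - 1) * Real.log ((q:ℝ)/(k:ℝ) - 1) := by
    rw [Gfun, Real.log_div (ne_of_gt (rpow_pos_of_pos hα0 _)) (ne_of_gt (rpow_pos_of_pos hα1 _)),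
      Real.log_rpow hα0, Real.log_rpow hα1]
  have hbig : Real.log ((q : ℝ) ^ q / (((q - k : ℕ) : ℝ) ^ (q - k) * (k : ℝ) ^ k))
      = (q:ℝ) * Real.log (q:ℝ)
        - (((q-k:ℕ):ℝ) * Real.log ((q - k : ℕ) : ℝ) + (k:ℝ) * Real.log (k:ℝ)) := by
    rw [Real.log_div (by positivity) (by positivity),
      Real.log_mul (by positivity) (by positivity),
      Real.log_pow, Real.log_pow, Real.log_pow]
  rw [hlogL, Real.log_rpow hbase, hbig]
  have h1 : Real.log ((q:ℝ)/(k:ℝ)) = Real.log (q:ℝ) - Real.log (k:ℝ) :=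
    Real.log_div (ne_of_gt hq0) (ne_of_gt hk0)
  have h2 : (q:ℝ)/(k:ℝ) - 1 = ((q:ℝ) - (k:ℝ))/(k:ℝ) := by field_simp
  have h3 : Real.log ((q:ℝ)/(k:ℝ) - 1) = Real.log ((q:ℝ) - (k:ℝ)) - Real.log (k:ℝ) := by
    rw [h2]; exact Real.log_div (by linarith) (ne_of_gt hk0)
  have h4 : Real.log ((q - k : ℕ) : ℝ) = Real.log ((q:ℝ) - (k:ℝ)) := by rw [hdcast]
  rw [h1, h3, h4, hdcast]
  field_simp
  ring

lemma exists_alpha {α₀ : ℝ} (hα₀ : 1 < α₀) {ε' : ℝ} (hε' : 0 < ε') :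
    ∃ α : ℝ, 1 < α ∧ α < α₀ ∧ Gfun α₀ - ε' < Gfun α := by
  have hc := Gfun_contAt hα₀
  rw [Metric.continuousAt_iff] at hc
  obtain ⟨δ, hδ0, hδ⟩ := hc ε' hε'
  refine ⟨α₀ - min δ (α₀ - 1) / 2, ?_, ?_, ?_⟩
  · have : min δ (α₀ - 1) ≤ α₀ - 1 := min_le_right _ _
    linarith
  · have : 0 < min δ (α₀ - 1) := lt_min hδ0 (by linarith)
    linarith
  · have hd : dist (α₀ - min δ (α₀ - 1) / 2) α₀ < δ := by
      rw [Real.dist_eq]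
      have h1 : 0 < min δ (α₀ - 1) := lt_min hδ0 (by linarith)
      have h2 : min δ (α₀ - 1) ≤ δ := min_le_left _ _
      rw [abs_of_nonpos (by linarith)]
      linarith
    have := hδ hd
    rw [Real.dist_eq, abs_lt] at this
    linarith [this.1]

lemma per_robot {α μ N : ℝ} (hα : 1 < α) (hμ : 0 < μ) (hμm : μ ≤ Gfun α) (hN : 1 ≤ N)
    (t : ℕ → ℝ) (ht : ∀ i, 1 ≤ t i) (K : ℕ) :
    ∑ i ∈ Finset.range K, max (min (Real.log (t i)) (Real.log N)
        - max 0 (Real.log ((∑ j ∈ Finset.range i, t j) / μ))) 0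
      ≤ α * (Real.log 2 + Real.log N) + (max μ 1 + 1) * Real.log (max μ 1) := by
  have hN0 : (0:ℝ) < N := by linarith
  set M : ℝ := Real.log N with hMdef
  have hM0 : 0 ≤ M := Real.log_nonneg hN
  set μ' : ℝ := max μ 1 with hμ'def
  have hμ'1 : (1:ℝ) ≤ μ' := le_max_right _ _
  have hμ'0 : (0:ℝ) < μ' := by linarith
  have hμμ' : μ ≤ μ' := le_max_left _ _
  have hlogμ' : 0 ≤ Real.log μ' := Real.log_nonneg hμ'1
  have hlog2 : 0 ≤ Real.log 2 := Real.log_nonneg (by norm_num)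
  set t' : ℕ → ℝ := fun i => min (t i) N with ht'def
  have ht'1 : ∀ i, 1 ≤ t' i := fun i => le_min (ht i) hN
  have ht'0 : ∀ i, 0 < t' i := fun i => lt_of_lt_of_le one_pos (ht'1 i)
  have ht'N : ∀ i, t' i ≤ N := fun i => min_le_right _ _
  set S' : ℕ → ℝ := fun i => ∑ j ∈ Finset.range i, t' j with hS'def
  have hS'succ : ∀ i, S' (i+1) = S' i + t' i := fun i => Finset.sum_range_succ _ _
  have hS'nonneg : ∀ i, 0 ≤ S' i := fun i =>
    Finset.sum_nonneg fun j _ => (ht'0 j).le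
  have hiS' : ∀ i : ℕ, (i:ℝ) ≤ S' i := by
    intro i
    calc (i:ℝ) = ∑ _j ∈ Finset.range i, (1:ℝ) := by simp
      _ ≤ S' i := Finset.sum_le_sum fun j _ => ht'1 j
  have hS'S : ∀ i, S' i ≤ ∑ j ∈ Finset.range i, t j :=
    fun i => Finset.sum_le_sum fun j _ => min_le_left _ _
  set T : ℝ := Real.log 2 + Real.log μ' + M with hTdef
  have hμ'T : Real.log μ' ≤ T := by rw [hTdef]; linarith
  have hT2 : Real.log (2 * μ' * N) = T := by
    rw [Real.log_mul (by positivity) (by positivity),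
      Real.log_mul (by norm_num) (by positivity)]
  set ψ : ℕ → ℝ := fun i => min (Real.log (max (S' i) μ')) T with hψdef
  have hψmono : ∀ i, ψ i ≤ ψ (i+1) := by
    intro i
    apply min_le_min _ (le_refl T)
    apply Real.log_le_log (lt_of_lt_of_le hμ'0 (le_max_right _ _))
    apply max_le_max _ (le_refl μ')
    rw [hS'succ]; linarith [ht'0 i]
  have hψ0 : ψ 0 = Real.log μ' := by
    have h0 : S' 0 = 0 := by simp [hS'def]
    rw [hψdef]
    simp only [h0, max_eq_right hμ'0.le]
    exact min_eq_left hμ'T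
  -- per-round claim
  have hround : ∀ i, max (min (Real.log (t i)) M
      - max 0 (Real.log ((∑ j ∈ Finset.range i, t j) / μ))) 0
      ≤ α * (ψ (i+1) - ψ i) + (if S' i < μ' then Real.log μ' else 0) := by
    intro i
    have hΔ : 0 ≤ ψ (i+1) - ψ i := by linarith [hψmono i]
    have hite0 : 0 ≤ (if S' i < μ' then Real.log μ' else 0) := by
      split
      · exact hlogμ'
      · exact le_refl 0
    have hα0' : (0:ℝ) ≤ α := by linarith
    have hrhs0' : 0 ≤ α * (ψ (i+1) - ψ i) := mul_nonneg hα0' hΔ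
    have hrhs0 : 0 ≤ α * (ψ (i+1) - ψ i) + (if S' i < μ' then Real.log μ' else 0) :=
      add_nonneg hrhs0' hite0
    have hble : min (Real.log (t i)) M ≤ Real.log (t' i) := by
      rcases le_total (t i) N with h | h
      · have : t' i = t i := min_eq_left h
        rw [this]; exact min_le_left _ _
      · have : t' i = N := min_eq_right h
        rw [this]; exact min_le_right _ _
    by_cases hA : μ' ≤ S' i
    · -- case A
      have hA0 : (0:ℝ) < S' i := by linarith
      rw [if_neg (not_lt.mpr hA), add_zero]
      by_cases hBT : S' (i+1) ≤ 2 * μ' * N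
      · -- A1
        have hB0 : (0:ℝ) < S' (i+1) := by rw [hS'succ]; linarith [ht'0 i]
        have hAB : S' i ≤ S' (i+1) := by rw [hS'succ]; linarith [ht'0 i]
        have hψi : ψ i = Real.log (S' i) := by
          rw [hψdef]
          simp only [max_eq_left hA]
          apply min_eq_left
          rw [← hT2]
          exact Real.log_le_log hA0 (le_trans hAB hBT)
        have hψi1 : ψ (i+1) = Real.log (S' (i+1)) := by
          rw [hψdef]
          simp only [max_eq_left (le_trans hA hAB)]
          apply min_eq_left
          rw [← hT2]
          exact Real.log_le_log hB0 hBT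
        rw [hψi, hψi1]
        have hlogAB : Real.log (S' i) ≤ Real.log (S' (i+1)) := Real.log_le_log hA0 hAB
        apply max_le _ (by nlinarith)
        have hamax : Real.log (S' i / μ) ≤
            max 0 (Real.log ((∑ j ∈ Finset.range i, t j) / μ)) := by
          apply le_trans _ (le_max_right _ _)
          apply Real.log_le_log (div_pos hA0 hμ)
          gcongr
          exact hS'S i
        have hrw1 : Real.log (S' i / μ) = Real.log (S' i) - Real.log μ :=
          Real.log_div (ne_of_gt hA0) (ne_of_gt hμ)
        have hrw2 : Real.log (μ * t' i / S' i)
            = Real.log μ + Real.log (t' i) - Real.log (S' i) := by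
          rw [Real.log_div (ne_of_gt (mul_pos hμ (ht'0 i))) (ne_of_gt hA0),
            Real.log_mul (ne_of_gt hμ) (ne_of_gt (ht'0 i))]
        have hρ : (1:ℝ) < S' (i+1) / S' i := by
          rw [one_lt_div hA0, hS'succ]; linarith [ht'0 i]
        have hkey := key_ineq hα hρ
        have hfrac : S' (i+1) / S' i - 1 = t' i / S' i := by
          rw [hS'succ]; field_simp; ring
        have hle2 : μ * t' i / S' i ≤ (S' (i+1) / S' i) ^ α := by
          rw [hfrac] at hkey
          have h0 : 0 ≤ t' i / S' i := div_nonneg (ht'0 i).le hA0.le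
          have : μ * (t' i / S' i) ≤ Gfun α * (t' i / S' i) :=
            mul_le_mul_of_nonneg_right hμm h0
          calc μ * t' i / S' i = μ * (t' i / S' i) := by ring
            _ ≤ Gfun α * (t' i / S' i) := this
            _ ≤ (S' (i+1) / S' i) ^ α := hkey
        have hle3 : Real.log (μ * t' i / S' i)
            ≤ α * (Real.log (S' (i+1)) - Real.log (S' i)) := by
          calc Real.log (μ * t' i / S' i)
              ≤ Real.log ((S' (i+1) / S' i) ^ α) :=
                Real.log_le_log (div_pos (mul_pos hμ (ht'0 i)) hA0) hle2
            _ = α * Real.log (S' (i+1) / S' i) := Real.log_rpow (div_pos hB0 hA0) α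
            _ = α * (Real.log (S' (i+1)) - Real.log (S' i)) := by
                rw [Real.log_div (ne_of_gt hB0) (ne_of_gt hA0)]
        linarith
      · -- A2
        push_neg at hBT
        have hN' : N ≤ μ' * N := by nlinarith
        have hAbig : μ * N ≤ S' i := by
          have h1 := hS'succ i
          have h2 := ht'N i
          nlinarith
        have hx : min (Real.log (t i)) M
            - max 0 (Real.log ((∑ j ∈ Finset.range i, t j) / μ)) ≤ 0 := by
          have hSt : μ * N ≤ ∑ j ∈ Finset.range i, t j := le_trans hAbig (hS'S i)
          have hdiv : N ≤ (∑ j ∈ Finset.range i, t j) / μ :=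
            (le_div_iff₀ hμ).mpr (by linarith)
          have hlog : M ≤ Real.log ((∑ j ∈ Finset.range i, t j) / μ) :=
            Real.log_le_log hN0 hdiv
          linarith [min_le_right (Real.log (t i)) M,
            le_max_right (0:ℝ) (Real.log ((∑ j ∈ Finset.range i, t j) / μ))]
        exact max_le (le_trans hx hrhs0') hrhs0'
    · -- case B
      push_neg at hA
      have hψi : ψ i = Real.log μ' := by
        rw [hψdef]
        simp only [max_eq_right hA.le]
        exact min_eq_left hμ'T
      have hcle : max (min (Real.log (t i)) M
          - max 0 (Real.log ((∑ j ∈ Finset.range i, t j) / μ))) 0 ≤ Real.log (t' i) := by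
        apply max_le _ (Real.log_nonneg (ht'1 i))
        have h0 : (0:ℝ) ≤ max 0 (Real.log ((∑ j ∈ Finset.range i, t j) / μ)) :=
          le_max_left _ _
        linarith
      have hup : Real.log (t' i) ≤ ψ (i+1) := by
        apply le_min
        · apply Real.log_le_log (ht'0 i)
          have h1 : t' i ≤ S' (i+1) := by rw [hS'succ]; linarith [hS'nonneg i]
          exact le_trans h1 (le_max_left _ _)
        · calc Real.log (t' i) ≤ M := Real.log_le_log (ht'0 i) (ht'N i)
            _ ≤ T := by rw [hTdef]; linarith
      have hD : 0 ≤ ψ (i+1) - Real.log μ' := by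
        rw [← hψi]; linarith [hψmono i]
      rw [if_pos hA, hψi]
      nlinarith [mul_nonneg (by linarith : (0:ℝ) ≤ α - 1) hD]
  -- assemble
  calc ∑ i ∈ Finset.range K, max (min (Real.log (t i)) M
        - max 0 (Real.log ((∑ j ∈ Finset.range i, t j) / μ))) 0
      ≤ ∑ i ∈ Finset.range K,
          (α * (ψ (i+1) - ψ i) + (if S' i < μ' then Real.log μ' else 0)) :=
        Finset.sum_le_sum fun i _ => hround i
    _ = α * (ψ K - ψ 0) + ∑ i ∈ Finset.range K,
          (if S' i < μ' then Real.log μ' else 0) := by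
        rw [Finset.sum_add_distrib, ← Finset.mul_sum, Finset.sum_range_sub]
    _ ≤ α * (Real.log 2 + M) + (μ' + 1) * Real.log μ' := by
        have h1 : ψ K - ψ 0 ≤ Real.log 2 + M := by
          have h2 : ψ K ≤ T := min_le_right _ _
          rw [hψ0]
          rw [hTdef] at h2
          linarith
        have h3 : α * (ψ K - ψ 0) ≤ α * (Real.log 2 + M) :=
          mul_le_mul_of_nonneg_left h1 (by linarith)
        have h4 : ∑ i ∈ Finset.range K, (if S' i < μ' then Real.log μ' else 0)
            ≤ (μ' + 1) * Real.log μ' := by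
          have hsub : ∀ i ∈ Finset.range K,
              (if S' i < μ' then Real.log μ' else 0)
              ≤ (if i ∈ Finset.range ⌈μ'⌉₊ then Real.log μ' else 0) := by
            intro i _
            by_cases h : S' i < μ'
            · rw [if_pos h, if_pos (Finset.mem_range.mpr
                (Nat.lt_ceil.mpr (lt_of_le_of_lt (hiS' i) h)))]
            · rw [if_neg h]
              split
              · exact hlogμ'
              · exact le_refl 0
          calc ∑ i ∈ Finset.range K, (if S' i < μ' then Real.log μ' else 0)
              ≤ ∑ i ∈ Finset.range K,
                  (if i ∈ Finset.range ⌈μ'⌉₊ then Real.log μ' else 0) :=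
                Finset.sum_le_sum hsub
            _ = ∑ _i ∈ Finset.range K ∩ Finset.range ⌈μ'⌉₊, Real.log μ' :=
                Finset.sum_ite_mem _ _ _
            _ = ((Finset.range K ∩ Finset.range ⌈μ'⌉₊).card : ℝ) * Real.log μ' := by
                rw [Finset.sum_const, nsmul_eq_mul]
            _ ≤ (⌈μ'⌉₊ : ℝ) * Real.log μ' := by
                apply mul_le_mul_of_nonneg_right _ hlogμ'
                have hcard := Finset.card_le_card
                  (Finset.inter_subset_right
                    (s₁ := Finset.range K) (s₂ := Finset.range ⌈μ'⌉₊))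
                rw [Finset.card_range] at hcard
                exact_mod_cast hcard
            _ ≤ (μ' + 1) * Real.log μ' :=
                mul_le_mul_of_nonneg_right (Nat.ceil_lt_add_one hμ'0.le).le hlogμ'
        linarith

open MeasureTheory ENNReal in
lemma cover_count {k : ℕ} (q : ℕ) (hq : 0 < q) {μ N : ℝ} (hμ : 0 < μ) (hN : 1 ≤ N)
    (t : Fin k → ℕ → ℝ) (ht : ∀ r i, 1 ≤ t r i)
    (hcov : ∀ x : ℝ, 1 ≤ x → x ≤ N →
      q ≤ {p : Fin k × ℕ | x ≤ t p.1 p.2 ∧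
            (∑ j ∈ Finset.range p.2, t p.1 j) ≤ μ * x}.ncard) :
    (q : ℝ) * Real.log N ≤
      ∑ p ∈ Finset.univ ×ˢ Finset.range (⌈μ * N⌉₊ + 1),
        max (min (Real.log (t p.1 p.2)) (Real.log N)
          - max 0 (Real.log ((∑ j ∈ Finset.range p.2, t p.1 j) / μ))) 0 := by
  have hN0 : (0:ℝ) < N := by linarith
  set M : ℝ := Real.log N with hMdef
  have hM0 : 0 ≤ M := Real.log_nonneg hN
  set a : Fin k × ℕ → ℝ := fun p =>
    max 0 (Real.log ((∑ j ∈ Finset.range p.2, t p.1 j) / μ)) with hadef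
  set b : Fin k × ℕ → ℝ := fun p => min (Real.log (t p.1 p.2)) M with hbdef
  set F : Finset (Fin k × ℕ) := Finset.univ ×ˢ Finset.range (⌈μ * N⌉₊ + 1) with hFdef
  have hmeas : ∀ p : Fin k × ℕ,
      Measurable ((Set.Icc (a p) (b p)).indicator (fun _ => (1:ℝ≥0∞))) :=
    fun p => measurable_const.indicator measurableSet_Icc
  have hpt : ∀ u ∈ Set.Icc (0:ℝ) M,
      (q : ℝ≥0∞) ≤ ∑ p ∈ F, (Set.Icc (a p) (b p)).indicator (fun _ => (1:ℝ≥0∞)) u := by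
    intro u hu
    obtain ⟨hu0, huM⟩ := hu
    set x : ℝ := Real.exp u with hxdef
    have hx0 : (0:ℝ) < x := Real.exp_pos u
    have hx1 : (1:ℝ) ≤ x := Real.one_le_exp hu0
    have hxN : x ≤ N := by
      have h := Real.exp_le_exp.mpr huM
      rwa [hMdef, Real.exp_log hN0] at h
    have hlogx : Real.log x = u := Real.log_exp u
    have hc := hcov x hx1 hxN
    set Cs : Set (Fin k × ℕ) := {p : Fin k × ℕ | x ≤ t p.1 p.2 ∧
      (∑ j ∈ Finset.range p.2, t p.1 j) ≤ μ * x} with hCsdef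
    have hfin : Cs.Finite := by
      by_contra hinf
      rw [Set.Infinite.ncard hinf] at hc
      omega
    have hcard : q ≤ hfin.toFinset.card := by
      rwa [Set.ncard_eq_toFinset_card Cs hfin] at hc
    have hsubF : hfin.toFinset ⊆ F := by
      intro p hp
      rw [Set.Finite.mem_toFinset] at hp
      obtain ⟨hpt', hps⟩ := hp
      have hiS : (p.2 : ℝ) ≤ ∑ j ∈ Finset.range p.2, t p.1 j := by
        calc (p.2:ℝ) = ∑ _j ∈ Finset.range p.2, (1:ℝ) := by simp
          _ ≤ _ := Finset.sum_le_sum fun j _ => ht p.1 j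
      have h2 : (p.2 : ℝ) ≤ μ * N := by
        have : μ * x ≤ μ * N := mul_le_mul_of_nonneg_left hxN hμ.le
        linarith
      have h3 : p.2 ≤ ⌈μ * N⌉₊ := by
        have := le_trans h2 (Nat.le_ceil (μ * N))
        exact_mod_cast this
      rw [hFdef, Finset.mem_product]
      exact ⟨Finset.mem_univ _, Finset.mem_range.mpr (by omega)⟩
    have hmem : ∀ p ∈ hfin.toFinset, u ∈ Set.Icc (a p) (b p) := by
      intro p hp
      rw [Set.Finite.mem_toFinset] at hp
      obtain ⟨hpt', hps⟩ := hp
      constructor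
      · apply max_le hu0
        have hS0 : 0 ≤ ∑ j ∈ Finset.range p.2, t p.1 j :=
          Finset.sum_nonneg fun j _ => le_trans zero_le_one (ht p.1 j)
        rcases eq_or_lt_of_le hS0 with h0 | hpos
        · rw [← h0, zero_div, Real.log_zero]; exact hu0
        · have hdx : (∑ j ∈ Finset.range p.2, t p.1 j) / μ ≤ x :=
            (div_le_iff₀' hμ).mpr hps
          calc Real.log ((∑ j ∈ Finset.range p.2, t p.1 j) / μ)
              ≤ Real.log x := Real.log_le_log (div_pos hpos hμ) hdx
            _ = u := hlogx
      · apply le_min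
        · rw [← hlogx]
          exact Real.log_le_log hx0 hpt'
        · exact huM
    calc (q : ℝ≥0∞) ≤ (hfin.toFinset.card : ℝ≥0∞) := by exact_mod_cast hcard
      _ = ∑ p ∈ hfin.toFinset, (Set.Icc (a p) (b p)).indicator (fun _ => (1:ℝ≥0∞)) u := by
          rw [Finset.sum_congr rfl (fun p hp => Set.indicator_of_mem (hmem p hp) _)]
          simp
      _ ≤ ∑ p ∈ F, (Set.Icc (a p) (b p)).indicator (fun _ => (1:ℝ≥0∞)) u :=
          Finset.sum_le_sum_of_subset_of_nonneg hsubF (fun _ _ _ => zero_le)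
  have hchain : (q : ℝ≥0∞) * ENNReal.ofReal M ≤
      ENNReal.ofReal (∑ p ∈ F, max (b p - a p) 0) := by
    calc (q : ℝ≥0∞) * ENNReal.ofReal M
        = ∫⁻ _u in Set.Icc (0:ℝ) M, (q : ℝ≥0∞) := by
          rw [MeasureTheory.setLIntegral_const, Real.volume_Icc, sub_zero]
      _ ≤ ∫⁻ u in Set.Icc (0:ℝ) M,
            ∑ p ∈ F, (Set.Icc (a p) (b p)).indicator (fun _ => (1:ℝ≥0∞)) u :=
          MeasureTheory.setLIntegral_mono
            (Finset.measurable_sum F fun p _ => hmeas p) hpt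
      _ = ∑ p ∈ F, ∫⁻ u in Set.Icc (0:ℝ) M,
            (Set.Icc (a p) (b p)).indicator (fun _ => (1:ℝ≥0∞)) u :=
          MeasureTheory.lintegral_finset_sum F fun p _ => hmeas p
      _ ≤ ∑ p ∈ F, ENNReal.ofReal (max (b p - a p) 0) := by
          apply Finset.sum_le_sum
          intro p _
          rw [MeasureTheory.lintegral_indicator measurableSet_Icc,
            MeasureTheory.setLIntegral_one]
          calc (volume.restrict (Set.Icc (0:ℝ) M)) (Set.Icc (a p) (b p))
              ≤ volume (Set.Icc (a p) (b p)) :=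
                MeasureTheory.Measure.restrict_le_self _
            _ = ENNReal.ofReal (b p - a p) := Real.volume_Icc
            _ ≤ ENNReal.ofReal (max (b p - a p) 0) :=
                ENNReal.ofReal_le_ofReal (le_max_left _ _)
      _ = ENNReal.ofReal (∑ p ∈ F, max (b p - a p) 0) :=
          (ENNReal.ofReal_sum_of_nonneg (fun p _ => le_max_right _ _)).symm
  have hnn : 0 ≤ ∑ p ∈ F, max (b p - a p) 0 :=
    Finset.sum_nonneg fun p _ => le_max_right _ _
  rw [← ENNReal.ofReal_natCast q, ← ENNReal.ofReal_mul (by positivity)] at hchain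
  exact (ENNReal.ofReal_le_ofReal_iff hnn).mp hchain


/-- Finite-window lower bound for the ORC setting: for every `ε > 0` there is a
bound `N ≥ 1`, depending only on `k`, `q`, `ε`, such that any `k` ORC strategies
producing a `q`-fold `λ`-cover of `[1, N]` must satisfy
`λ ≥ 2 (q^q/((q-k)^(q-k) k^k))^(1/k) + 1 - ε`. -/
theorem orc_cover_lower_bound_finite_window
    (k q : ℕ) (hk : 1 ≤ k) (hkq : k < q) (ε : ℝ) (hε : 0 < ε) :
    ∃ N : ℝ, 1 ≤ N ∧
      ∀ (lam : ℝ), 1 < lam →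
        ∀ t : Fin k → ℕ → ℝ, (∀ r i, 1 ≤ t r i) →
          (∀ x : ℝ, 1 ≤ x → x ≤ N →
            q ≤ {p : Fin k × ℕ | x ≤ t p.1 p.2 ∧
                  (∑ j ∈ Finset.range p.2, t p.1 j) ≤ ((lam - 1) / 2) * x}.ncard) →
          2 * ((q : ℝ) ^ q / (((q - k : ℕ) : ℝ) ^ (q - k) * (k : ℝ) ^ k)) ^ ((1 : ℝ) / k)
            + 1 - ε ≤ lam := by
  have hk0 : (0:ℝ) < (k:ℝ) := by exact_mod_cast hk
  have hqk : (k:ℝ) < (q:ℝ) := by exact_mod_cast hkq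
  have hα₀ : (1:ℝ) < (q:ℝ)/(k:ℝ) := (one_lt_div hk0).mpr hqk
  obtain ⟨α, hα1, hαlt, hαG⟩ := exists_alpha hα₀ (half_pos hε)
  have hα0 : (0:ℝ) < α := by linarith
  set m : ℝ := Gfun α with hmdef
  have hm1 : (1:ℝ) ≤ m := le_trans hα1.le (le_Gfun hα1)
  have hlogm : 0 ≤ Real.log m := Real.log_nonneg hm1
  have hlog2 : 0 ≤ Real.log 2 := Real.log_nonneg (by norm_num)
  set C : ℝ := k * (α * Real.log 2 + (m + 1) * Real.log m) with hCdef
  have hqkα : 0 < (q:ℝ) - k * α := by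
    have h1 : (k:ℝ) * α < k * ((q:ℝ)/(k:ℝ)) := mul_lt_mul_of_pos_left hαlt hk0
    have h2 : (k:ℝ) * ((q:ℝ)/(k:ℝ)) = q := by field_simp
    linarith
  have hC0 : 0 ≤ C := by
    apply mul_nonneg hk0.le
    have := mul_nonneg (by linarith : (0:ℝ) ≤ m + 1) hlogm
    nlinarith
  set N : ℝ := Real.exp ((C+1)/((q:ℝ) - k*α)) with hNdef
  have hN1 : 1 ≤ N := Real.one_le_exp (div_nonneg (by linarith) hqkα.le)
  have hN0 : (0:ℝ) < N := by linarith
  have hMval : Real.log N = (C+1)/((q:ℝ) - k*α) := Real.log_exp _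
  refine ⟨N, hN1, ?_⟩
  intro lam hlam t ht hcov
  set μ : ℝ := (lam - 1)/2 with hμdef
  have hμ0 : 0 < μ := by rw [hμdef]; linarith
  have hBeq := Gfun_alpha0 hk hkq
  by_cases hμm : μ ≤ m
  · exfalso
    have hcount := cover_count q (by omega) hμ0 hN1 t ht hcov
    have hper : ∀ r : Fin k,
        ∑ i ∈ Finset.range (⌈μ * N⌉₊ + 1), max (min (Real.log (t r i)) (Real.log N)
          - max 0 (Real.log ((∑ j ∈ Finset.range i, t r j) / μ))) 0
        ≤ α * (Real.log 2 + Real.log N) + (max μ 1 + 1) * Real.log (max μ 1) :=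
      fun r => per_robot hα1 hμ0 hμm hN1 (t r) (ht r) _
    have hμ'm : max μ 1 ≤ m := max_le hμm hm1
    have hμ'0 : (0:ℝ) < max μ 1 := lt_of_lt_of_le one_pos (le_max_right _ _)
    have hmono : (max μ 1 + 1) * Real.log (max μ 1) ≤ (m + 1) * Real.log m := by
      apply mul_le_mul (by linarith) (Real.log_le_log hμ'0 hμ'm)
        (Real.log_nonneg (le_max_right _ _)) (by linarith)
    have htot : (q:ℝ) * Real.log N ≤
        k * (α * (Real.log 2 + Real.log N) + (m + 1) * Real.log m) := by
      calc (q:ℝ) * Real.log N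
          ≤ ∑ p ∈ Finset.univ ×ˢ Finset.range (⌈μ * N⌉₊ + 1),
              max (min (Real.log (t p.1 p.2)) (Real.log N)
                - max 0 (Real.log ((∑ j ∈ Finset.range p.2, t p.1 j) / μ))) 0 := hcount
        _ = ∑ r : Fin k, ∑ i ∈ Finset.range (⌈μ * N⌉₊ + 1),
              max (min (Real.log (t r i)) (Real.log N)
                - max 0 (Real.log ((∑ j ∈ Finset.range i, t r j) / μ))) 0 :=
            Finset.sum_product _ _ _
        _ ≤ ∑ _r : Fin k,
              (α * (Real.log 2 + Real.log N) + (m + 1) * Real.log m) := by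
            apply Finset.sum_le_sum
            intro r _
            exact le_trans (hper r) (by linarith)
        _ = k * (α * (Real.log 2 + Real.log N) + (m + 1) * Real.log m) := by
            rw [Finset.sum_const, Finset.card_univ, Fintype.card_fin, nsmul_eq_mul]
    have hfin : ((q:ℝ) - k*α) * Real.log N ≤ C := by nlinarith
    rw [hMval] at hfin
    rw [mul_div_cancel₀ _ (ne_of_gt hqkα)] at hfin
    linarith
  · push_neg at hμm
    rw [← hBeq]
    have : Gfun ((q:ℝ)/(k:ℝ)) - ε/2 < μ := lt_trans hαG hμm
    rw [hμdef] at this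
    linarith
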